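/- Under the two-group normal model, if μ ≤ sqrt(2(1-ε) log |S_0|) + sqrt(2 log |S_1|) for some fixed ε > 0, then P(min_{i∈S_1} X_i > max_{i∈S_0} X_i) → 0 as |S_0|, |S_1| → ∞; that is, with probability tending to 1 at least one signal observation is mixed into the range of the noise. -/

import Mathlib

open MeasureTheory ProbabilityTheory Filter Set

lemma aux_sqrt_tendsto : Tendsto Real.sqrt atTop atTop := by
  refine tendsto_atTop.2 fun b => eventually_atTop.2 ⟨(max b 0)^2, fun x hx => ?_⟩
  calc b ≤ max b 0 := le_max_left _ _
    _ = Real.sqrt ((max b 0)^2) := (Real.sqrt_sq (le_max_right b 0)).symm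
    _ ≤ Real.sqrt x := Real.sqrt_le_sqrt hx

lemma aux_sqrt_two_mul_le {c : ℝ} (hc : 0 < c) {x : ℝ} (hx : 0 ≤ x) :
    Real.sqrt (2 * x) ≤ 1 / c + c / 2 * x := by
  rw [Real.sqrt_le_iff]
  constructor
  · positivity
  · have h := sq_nonneg (1 / c - c / 2 * x)
    have hc2 : (1:ℝ)/c * (c/2) = 1/2 := by field_simp
    nlinarith [sq_nonneg (1/c - c/2*x)]

lemma aux_min_tendsto {f g : ℕ → ℝ} (hf : Tendsto f atTop atTop)
    (hg : Tendsto g atTop atTop) : Tendsto (fun k => min (f k) (g k)) atTop atTop := by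
  refine tendsto_atTop.2 fun b => ?_
  filter_upwards [tendsto_atTop.1 hf b, tendsto_atTop.1 hg b] with k h1 h2
  exact le_min h1 h2

lemma aux_gauss_Icc_ge {a b c : ℝ} (hab : a ≤ b)
    (hc : ∀ x ∈ Set.Icc a b, c ≤ gaussianPDFReal 0 1 x) :
    ENNReal.ofReal ((b - a) * c) ≤ gaussianReal 0 1 (Set.Icc a b) := by
  rw [gaussianReal_apply_eq_integral 0 (by norm_num) (Set.Icc a b)]
  refine ENNReal.ofReal_le_ofReal ?_
  have h1 : (b - a) * c = ∫ _ in Set.Icc a b, c := by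
    rw [setIntegral_const, measureReal_def, Real.volume_Icc, ENNReal.toReal_ofReal (by linarith), smul_eq_mul]
  rw [h1]
  refine setIntegral_mono_on ?_ ?_ measurableSet_Icc hc
  · exact integrableOn_const (by rw [Real.volume_Icc]; exact ENNReal.ofReal_ne_top)
  · exact (integrable_gaussianPDFReal 0 1).integrableOn

lemma aux_pdf_ge {u x : ℝ} (hu : 0 ≤ u) (hx : x^2 ≤ (u+1)^2) :
    (Real.sqrt (2 * Real.pi))⁻¹ * Real.exp (-(u + 1)^2 / 2) ≤ gaussianPDFReal 0 1 x := by
  unfold gaussianPDFReal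
  simp only [NNReal.coe_one, mul_one, sub_zero]
  have h : Real.exp (-(u + 1)^2 / 2) ≤ Real.exp (-x^2 / 2) :=
    Real.exp_le_exp.2 (by linarith)
  exact mul_le_mul_of_nonneg_left h (inv_nonneg.2 (Real.sqrt_nonneg _))

lemma aux_gauss_Ici_ge (s : ℝ) :
    ENNReal.ofReal ((Real.sqrt (2 * Real.pi))⁻¹ * Real.exp (-(max s 0 + 1)^2 / 2))
      ≤ gaussianReal 0 1 (Set.Ici s) := by
  set u := max s 0 with hu
  have hu0 : 0 ≤ u := le_max_right _ _
  calc ENNReal.ofReal ((Real.sqrt (2 * Real.pi))⁻¹ * Real.exp (-(u + 1)^2 / 2))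
      = ENNReal.ofReal ((u + 1 - u) * ((Real.sqrt (2 * Real.pi))⁻¹ * Real.exp (-(u + 1)^2 / 2))) := by
        ring_nf
    _ ≤ gaussianReal 0 1 (Set.Icc u (u+1)) := by
        refine aux_gauss_Icc_ge (by linarith) fun x hx => ?_
        exact aux_pdf_ge hu0 (by nlinarith [hx.1, hx.2])
    _ ≤ gaussianReal 0 1 (Set.Ici s) := by
        refine measure_mono fun x hx => ?_
        exact le_trans (le_trans (le_max_left s 0) hx.1) (le_refl x) |>.trans (le_refl x)

lemma aux_gauss_Iic_ge (s : ℝ) :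
    ENNReal.ofReal ((Real.sqrt (2 * Real.pi))⁻¹ * Real.exp (-(max (-s) 0 + 1)^2 / 2))
      ≤ gaussianReal 0 1 (Set.Iic s) := by
  set u := max (-s) 0 with hu
  have hu0 : 0 ≤ u := le_max_right _ _
  calc ENNReal.ofReal ((Real.sqrt (2 * Real.pi))⁻¹ * Real.exp (-(u + 1)^2 / 2))
      = ENNReal.ofReal ((-u - (-(u+1))) * ((Real.sqrt (2 * Real.pi))⁻¹ * Real.exp (-(u + 1)^2 / 2))) := by
        ring_nf
    _ ≤ gaussianReal 0 1 (Set.Icc (-(u+1)) (-u)) := by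
        refine aux_gauss_Icc_ge (by linarith) fun x hx => ?_
        exact aux_pdf_ge hu0 (by nlinarith [hx.1, hx.2])
    _ ≤ gaussianReal 0 1 (Set.Iic s) := by
        refine measure_mono fun x hx => ?_
        have : -s ≤ u := le_max_left _ _
        have := hx.2
        simp only [Set.mem_Iic]
        linarith

lemma aux_meas_iInter_comp {Ωk ι κ : Type*} [MeasurableSpace Ωk] {P : Measure Ωk} [Fintype ι]
    {f : κ → Ωk → ℝ} (hindep : iIndepFun f P)
    (g : ι → κ) (hg : Function.Injective g) (B : Set ℝ) (hB : MeasurableSet B) :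
    P (⋂ i : ι, f (g i) ⁻¹' B) = ∏ i : ι, P (f (g i) ⁻¹' B) := by
  have h := hindep.meas_biInter (S := Finset.univ.map ⟨g, hg⟩)
    (s := fun x => f x ⁻¹' B) (fun x _ => ⟨B, hB, rfl⟩)
  have h2 : (⋂ x ∈ Finset.univ.map ⟨g, hg⟩, f x ⁻¹' B) = ⋂ i : ι, f (g i) ⁻¹' B := by
    ext ω
    simp only [Set.mem_iInter, Finset.mem_map, Finset.mem_univ, true_and,
      Function.Embedding.coeFn_mk]
    constructor
    · intro h i; exact h (g i) ⟨i, rfl⟩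
    · rintro h x ⟨i, rfl⟩; exact h i
  rw [h2, Finset.prod_map] at h
  exact h

lemma aux_log_nat_nonneg (n : ℕ) : 0 ≤ Real.log n := by
  rcases Nat.eq_zero_or_pos n with h | h
  · simp [h]
  · exact Real.log_nonneg (by exact_mod_cast h)

lemma aux_one_sub_le {p : ℝ} (hp : 0 ≤ p) {q : ENNReal} (hq : ENNReal.ofReal p ≤ q) :
    1 - q ≤ ENNReal.ofReal (Real.exp (-p)) := by
  calc 1 - q ≤ 1 - ENNReal.ofReal p := tsub_le_tsub_left hq 1
    _ = ENNReal.ofReal (1 - p) := by rw [ENNReal.ofReal_sub 1 hp, ENNReal.ofReal_one]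
    _ ≤ ENNReal.ofReal (Real.exp (-p)) := by
        refine ENNReal.ofReal_le_ofReal ?_
        have := Real.add_one_le_exp (-p)
        linarith

lemma aux_pow_exp {q : ENNReal} {p : ℝ} (h : q ≤ ENNReal.ofReal (Real.exp (-p))) (n : ℕ) :
    q ^ n ≤ ENNReal.ofReal (Real.exp (-((n : ℝ) * p))) := by
  calc q ^ n ≤ (ENNReal.ofReal (Real.exp (-p))) ^ n := by gcongr
    _ = ENNReal.ofReal (Real.exp (-p) ^ n) := by rw [ENNReal.ofReal_pow (Real.exp_nonneg _)]
    _ = ENNReal.ofReal (Real.exp (-((n : ℝ) * p))) := by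
        rw [← Real.exp_nat_mul]; ring_nf

lemma aux_core {L1 d b m : ℝ} (hd : 1 ≤ d) (hb2 : b ^ 2 = 2 * L1)
    (hm0 : 0 ≤ m) (hm : m ≤ max (b - d) 0) :
    min (L1 - 1/2) ((d ^ 2 - 1)/2) ≤ L1 - (m + 1)^2 / 2 := by
  have hmono : (m + 1)^2 ≤ (max (b - d) 0 + 1)^2 := by nlinarith [le_max_right (b - d) 0]
  have hkey : min (L1 - 1/2) ((d ^ 2 - 1)/2) ≤ L1 - (max (b - d) 0 + 1)^2 / 2 := by
    rcases le_or_gt b d with hbd | hbd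
    · rw [max_eq_right (by linarith)]
      calc min (L1 - 1/2) ((d ^ 2 - 1)/2) ≤ L1 - 1/2 := min_le_left _ _
        _ = L1 - (0 + 1)^2 / 2 := by ring
    · rw [max_eq_left (by linarith)]
      calc min (L1 - 1/2) ((d ^ 2 - 1)/2) ≤ (d ^ 2 - 1)/2 := min_le_right _ _
        _ ≤ L1 - (b - d + 1)^2 / 2 := by nlinarith [mul_nonneg (sub_nonneg.2 hd) (sub_nonneg.2 hbd.le)]
  linarith

/-- Two-group normal model: if `μ ≤ sqrt (2(1-ε) log |S₀|) + sqrt (2 log |S₁|)` for some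
fixed `ε > 0`, then `P(min_{i ∈ S₁} X_i > max_{i ∈ S₀} X_i) → 0` as `|S₀|, |S₁| → ∞`,
i.e. with probability tending to one at least one signal observation is mixed into the
range of the noise (the indistinguishable subset exists). -/
theorem indistinguishable_subset_exists
    {Ω : ℕ → Type*} [∀ k, MeasurableSpace (Ω k)]
    (P : ∀ k, Measure (Ω k)) [∀ k, IsProbabilityMeasure (P k)]
    (n₀ n₁ : ℕ → ℕ) (hn₀ : Tendsto n₀ atTop atTop) (hn₁ : Tendsto n₁ atTop atTop)
    (μ : ℕ → ℝ) (ε : ℝ) (hε : 0 < ε)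
    (X : ∀ k, (Fin (n₀ k) ⊕ Fin (n₁ k)) → Ω k → ℝ)
    (hmeas : ∀ k i, Measurable (X k i))
    (hindep : ∀ k, iIndepFun (X k) (P k))
    (hnoise : ∀ k i, Measure.map (X k (Sum.inl i)) (P k) = gaussianReal 0 1)
    (hsignal : ∀ k j, Measure.map (X k (Sum.inr j)) (P k) = gaussianReal (μ k) 1)
    (hμ : ∀ k, μ k ≤ Real.sqrt (2 * (1 - ε) * Real.log (n₀ k))
        + Real.sqrt (2 * Real.log (n₁ k))) :
    Tendsto
      (fun k => P k {ω | (⨆ i, X k (Sum.inl i) ω) < ⨅ j, X k (Sum.inr j) ω})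
      atTop (nhds 0) := by
  -- setup
  set ε' : ℝ := min ε (1/2) with hε'def
  have hε'pos : 0 < ε' := lt_min hε (by norm_num)
  have hε'le : ε' ≤ 1/2 := min_le_right _ _
  set L₀ : ℕ → ℝ := fun k => Real.log (n₀ k) with hL₀def
  set L₁ : ℕ → ℝ := fun k => Real.log (n₁ k) with hL₁def
  have hL₀nonneg : ∀ k, 0 ≤ L₀ k := fun k => aux_log_nat_nonneg _
  have hL₁nonneg : ∀ k, 0 ≤ L₁ k := fun k => aux_log_nat_nonneg _
  set t : ℕ → ℝ := fun k => Real.sqrt (2 * (1 - ε'/2) * L₀ k) with htdef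
  have ht0 : ∀ k, 0 ≤ t k := fun k => Real.sqrt_nonneg _
  have hμ' : ∀ k, μ k ≤ Real.sqrt (2 * (1 - ε') * L₀ k) + Real.sqrt (2 * L₁ k) := by
    intro k
    refine le_trans (hμ k) (add_le_add_left (Real.sqrt_le_sqrt ?_) _)
    have h1 : 2 * (1 - ε) ≤ 2 * (1 - ε') := by
      have : ε' ≤ ε := min_le_left _ _
      linarith
    exact mul_le_mul_of_nonneg_right h1 (hL₀nonneg k)
  set ρ₀ : ℕ → ℝ := fun k => (Real.sqrt (2 * Real.pi))⁻¹ *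
    Real.exp (-(max (t k) 0 + 1)^2 / 2) with hρ₀def
  set ρ₁ : ℕ → ℝ := fun k => (Real.sqrt (2 * Real.pi))⁻¹ *
    Real.exp (-(max (-(t k - μ k)) 0 + 1)^2 / 2) with hρ₁def
  have hsqrtpipos : 0 < (Real.sqrt (2 * Real.pi))⁻¹ := by
    rw [inv_pos]
    exact Real.sqrt_pos.2 (by positivity)
  have hρ₀nonneg : ∀ k, 0 ≤ ρ₀ k := fun k => by positivity
  have hρ₁nonneg : ∀ k, 0 ≤ ρ₁ k := fun k => by positivity
  -- the key probability bound
  have hbound : ∀ k, P k {ω | (⨆ i, X k (Sum.inl i) ω) < ⨅ j, X k (Sum.inr j) ω}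
      ≤ ENNReal.ofReal (Real.exp (-((n₀ k : ℝ) * ρ₀ k)))
        + ENNReal.ofReal (Real.exp (-((n₁ k : ℝ) * ρ₁ k))) := by
    intro k
    have hsub : {ω | (⨆ i, X k (Sum.inl i) ω) < ⨅ j, X k (Sum.inr j) ω}
        ⊆ (⋂ i, X k (Sum.inl i) ⁻¹' Set.Iio (t k)) ∪
          (⋂ j, X k (Sum.inr j) ⁻¹' Set.Ioi (t k)) := by
      intro ω hω
      by_cases hB : ω ∈ ⋂ j, X k (Sum.inr j) ⁻¹' Set.Ioi (t k)
      · exact Or.inr hB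
      · left
        simp only [Set.mem_iInter, Set.mem_preimage, Set.mem_Ioi, not_forall, not_lt] at hB
        obtain ⟨j₀, hj₀⟩ := hB
        have hinf : (⨅ j, X k (Sum.inr j) ω) ≤ t k :=
          le_trans (ciInf_le (Finite.bddBelow_range _) j₀) hj₀
        have hω' : (⨆ i, X k (Sum.inl i) ω) < ⨅ j, X k (Sum.inr j) ω := hω
        refine Set.mem_iInter.2 fun i => ?_
        exact lt_of_le_of_lt (le_ciSup (Finite.bddAbove_range _) i)
          (lt_of_lt_of_le hω' hinf)
    have hA : P k (⋂ i, X k (Sum.inl i) ⁻¹' Set.Iio (t k))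
        ≤ ENNReal.ofReal (Real.exp (-((n₀ k : ℝ) * ρ₀ k))) := by
      have hAeq : P k (⋂ i, X k (Sum.inl i) ⁻¹' Set.Iio (t k))
          = (gaussianReal 0 1 (Set.Iio (t k))) ^ (n₀ k) := by
        rw [aux_meas_iInter_comp (hindep k) Sum.inl Sum.inl_injective _ measurableSet_Iio]
        have heach : ∀ i : Fin (n₀ k), P k (X k (Sum.inl i) ⁻¹' Set.Iio (t k))
            = gaussianReal 0 1 (Set.Iio (t k)) := fun i => by
          rw [← Measure.map_apply (hmeas k _) measurableSet_Iio, hnoise k i]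
        simp [heach]
      rw [hAeq]
      refine aux_pow_exp ?_ (n₀ k)
      have hc : gaussianReal 0 1 (Set.Iio (t k)) = 1 - gaussianReal 0 1 (Set.Ici (t k)) := by
        rw [← Set.compl_Ici, measure_compl measurableSet_Ici (measure_ne_top _ _), measure_univ]
      rw [hc]
      exact aux_one_sub_le (hρ₀nonneg k) (aux_gauss_Ici_ge (t k))
    have hB : P k (⋂ j, X k (Sum.inr j) ⁻¹' Set.Ioi (t k))
        ≤ ENNReal.ofReal (Real.exp (-((n₁ k : ℝ) * ρ₁ k))) := by
      have hBeq : P k (⋂ j, X k (Sum.inr j) ⁻¹' Set.Ioi (t k))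
          = (gaussianReal (μ k) 1 (Set.Ioi (t k))) ^ (n₁ k) := by
        rw [aux_meas_iInter_comp (hindep k) Sum.inr Sum.inr_injective _ measurableSet_Ioi]
        have heach : ∀ j : Fin (n₁ k), P k (X k (Sum.inr j) ⁻¹' Set.Ioi (t k))
            = gaussianReal (μ k) 1 (Set.Ioi (t k)) := fun j => by
          rw [← Measure.map_apply (hmeas k _) measurableSet_Ioi, hsignal k j]
        simp [heach]
      rw [hBeq]
      refine aux_pow_exp ?_ (n₁ k)
      have hshift : gaussianReal (μ k) 1 (Set.Ioi (t k))
          = gaussianReal 0 1 (Set.Ioi (t k - μ k)) := by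
        have hmap : (gaussianReal 0 1).map (· + μ k) = gaussianReal (μ k) 1 := by
          rw [gaussianReal_map_add_const, zero_add]
        rw [← hmap, Measure.map_apply (measurable_add_const (μ k)) measurableSet_Ioi]
        congr 1
        ext x
        simp [Set.mem_Ioi, sub_lt_iff_lt_add]
      rw [hshift]
      have hc : gaussianReal 0 1 (Set.Ioi (t k - μ k))
          = 1 - gaussianReal 0 1 (Set.Iic (t k - μ k)) := by
        rw [← Set.compl_Iic, measure_compl measurableSet_Iic (measure_ne_top _ _), measure_univ]
      rw [hc]
      exact aux_one_sub_le (hρ₁nonneg k) (aux_gauss_Iic_ge (t k - μ k))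
    calc P k {ω | (⨆ i, X k (Sum.inl i) ω) < ⨅ j, X k (Sum.inr j) ω}
        ≤ P k ((⋂ i, X k (Sum.inl i) ⁻¹' Set.Iio (t k)) ∪
            (⋂ j, X k (Sum.inr j) ⁻¹' Set.Ioi (t k))) := measure_mono hsub
      _ ≤ P k (⋂ i, X k (Sum.inl i) ⁻¹' Set.Iio (t k))
          + P k (⋂ j, X k (Sum.inr j) ⁻¹' Set.Ioi (t k)) := measure_union_le _ _
      _ ≤ _ := add_le_add hA hB
  -- limits
  have hL₀tend : Tendsto L₀ atTop atTop :=
    Real.tendsto_log_atTop.comp (tendsto_natCast_atTop_atTop.comp hn₀)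
  have hL₁tend : Tendsto L₁ atTop atTop :=
    Real.tendsto_log_atTop.comp (tendsto_natCast_atTop_atTop.comp hn₁)
  have hmaxt : ∀ k, max (t k) 0 = t k := fun k => max_eq_left (ht0 k)
  have ht2 : ∀ k, (t k)^2 = 2 * (1 - ε'/2) * L₀ k := by
    intro k
    exact Real.sq_sqrt (by nlinarith [hL₀nonneg k])
  -- noise-side limit
  have h₀ : Tendsto (fun k => (n₀ k : ℝ) * ρ₀ k) atTop atTop := by
    have hlow : Tendsto (fun k => (Real.sqrt (2 * Real.pi))⁻¹ *
        Real.exp (ε'/4 * L₀ k - 2/ε' - 1/2)) atTop atTop := by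
      refine Tendsto.const_mul_atTop hsqrtpipos (Real.tendsto_exp_atTop.comp ?_)
      have h1 : Tendsto (fun k => ε'/4 * L₀ k + (-(2/ε') - 1/2)) atTop atTop :=
        tendsto_atTop_add_const_right _ _ (hL₀tend.const_mul_atTop (by positivity))
      exact h1.congr (fun k => by ring)
    refine tendsto_atTop_mono' atTop ?_ hlow
    filter_upwards [hn₀.eventually_ge_atTop 1] with k hk1
    have hn₀pos : (0:ℝ) < (n₀ k : ℝ) := by exact_mod_cast hk1
    have hexp : (n₀ k : ℝ) = Real.exp (L₀ k) := (Real.exp_log hn₀pos).symm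
    have hval : (n₀ k : ℝ) * ρ₀ k = (Real.sqrt (2 * Real.pi))⁻¹ *
        Real.exp (L₀ k - (t k + 1)^2 / 2) := by
      have hsplit : Real.exp (L₀ k - (t k + 1)^2 / 2)
          = Real.exp (L₀ k) * Real.exp (-(t k + 1)^2 / 2) := by
        rw [← Real.exp_add]; ring_nf
      rw [hρ₀def]
      simp only [hmaxt k]
      rw [hexp, hsplit]
      ring
    rw [hval]
    refine mul_le_mul_of_nonneg_left (Real.exp_le_exp.2 ?_) (le_of_lt hsqrtpipos)
    have htle : t k ≤ Real.sqrt (2 * L₀ k) := Real.sqrt_le_sqrt (by nlinarith [hL₀nonneg k])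
    have hs : Real.sqrt (2 * L₀ k) ≤ 1/(ε'/2) + (ε'/2)/2 * L₀ k :=
      aux_sqrt_two_mul_le (by positivity) (hL₀nonneg k)
    have h2c : 1/(ε'/2) = 2/ε' := by field_simp
    have halg : t k ≤ 2/ε' + ε'/4 * L₀ k := by
      calc t k ≤ Real.sqrt (2 * L₀ k) := htle
        _ ≤ 1/(ε'/2) + (ε'/2)/2 * L₀ k := hs
        _ = 2/ε' + ε'/4 * L₀ k := by rw [h2c]; ring
    nlinarith [ht2 k, halg]
  -- signal-side limit
  set δ : ℕ → ℝ := fun k => t k - Real.sqrt (2 * (1 - ε') * L₀ k) with hδdef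
  have hδ_eq : ∀ k, δ k = (Real.sqrt (2 - ε') - Real.sqrt (2 - 2*ε')) * Real.sqrt (L₀ k) := by
    intro k
    have e1 : 2 * (1 - ε'/2) * L₀ k = (2 - ε') * L₀ k := by ring
    have e2 : 2 * (1 - ε') * L₀ k = (2 - 2*ε') * L₀ k := by ring
    rw [hδdef, htdef]
    simp only
    rw [e1, e2, Real.sqrt_mul (by linarith), Real.sqrt_mul (by linarith)]
    ring
  have hc₂pos : 0 < Real.sqrt (2 - ε') - Real.sqrt (2 - 2*ε') :=
    sub_pos.2 (Real.sqrt_lt_sqrt (by linarith) (by linarith))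
  have hδtend : Tendsto δ atTop atTop := by
    refine Tendsto.congr (fun k => (hδ_eq k).symm) ?_
    exact (aux_sqrt_tendsto.comp hL₀tend).const_mul_atTop hc₂pos
  have h₁ : Tendsto (fun k => (n₁ k : ℝ) * ρ₁ k) atTop atTop := by
    have hmintend : Tendsto (fun k => min (L₁ k - 1/2) ((δ k ^ 2 - 1)/2)) atTop atTop := by
      refine aux_min_tendsto (tendsto_atTop_add_const_right _ _ hL₁tend) ?_
      have hdiv : Tendsto (fun k => (δ k + -1) / 2) atTop atTop :=
        Tendsto.atTop_div_const (by norm_num)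
          (tendsto_atTop_add_const_right _ (-1:ℝ) hδtend)
      refine tendsto_atTop_mono' atTop ?_ hdiv
      filter_upwards [hδtend.eventually_ge_atTop 1] with k hk
      show (δ k + -1) / 2 ≤ (δ k ^ 2 - 1) / 2
      revert hk
      generalize δ k = d
      intro hk
      nlinarith
    have hlow : Tendsto (fun k => (Real.sqrt (2 * Real.pi))⁻¹ *
        Real.exp (min (L₁ k - 1/2) ((δ k ^ 2 - 1)/2))) atTop atTop :=
      Tendsto.const_mul_atTop hsqrtpipos (Real.tendsto_exp_atTop.comp hmintend)
    refine tendsto_atTop_mono' atTop ?_ hlow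
    filter_upwards [hn₁.eventually_ge_atTop 1, hδtend.eventually_ge_atTop 1] with k hk1 hkδ
    have hn₁pos : (0:ℝ) < (n₁ k : ℝ) := by exact_mod_cast hk1
    have hexp : (n₁ k : ℝ) = Real.exp (L₁ k) := (Real.exp_log hn₁pos).symm
    have hval : (n₁ k : ℝ) * ρ₁ k = (Real.sqrt (2 * Real.pi))⁻¹ *
        Real.exp (L₁ k - (max (μ k - t k) 0 + 1)^2 / 2) := by
      have hsplit : Real.exp (L₁ k - (max (μ k - t k) 0 + 1)^2 / 2)
          = Real.exp (L₁ k) * Real.exp (-(max (μ k - t k) 0 + 1)^2 / 2) := by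
        rw [← Real.exp_add]; ring_nf
      rw [hρ₁def]
      simp only [neg_sub]
      rw [hexp, hsplit]
      ring
    rw [hval]
    refine mul_le_mul_of_nonneg_left (Real.exp_le_exp.2 ?_) (le_of_lt hsqrtpipos)
    -- core inequality
    refine aux_core hkδ (Real.sq_sqrt (by linarith [hL₁nonneg k])) (le_max_right _ _) ?_
    refine max_le_max ?_ le_rfl
    have h1 := hμ' k
    have h2 : δ k = t k - Real.sqrt (2 * (1 - ε') * L₀ k) := by rw [hδdef]
    linarith
  -- assemble
  have hexp₀ : Tendsto (fun k => Real.exp (-((n₀ k : ℝ) * ρ₀ k))) atTop (nhds 0) :=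
    Real.tendsto_exp_atBot.comp (tendsto_neg_atTop_atBot.comp h₀)
  have hexp₁ : Tendsto (fun k => Real.exp (-((n₁ k : ℝ) * ρ₁ k))) atTop (nhds 0) :=
    Real.tendsto_exp_atBot.comp (tendsto_neg_atTop_atBot.comp h₁)
  have hsum : Tendsto (fun k => ENNReal.ofReal (Real.exp (-((n₀ k : ℝ) * ρ₀ k)))
      + ENNReal.ofReal (Real.exp (-((n₁ k : ℝ) * ρ₁ k)))) atTop (nhds 0) := by
    have h0' := ENNReal.tendsto_ofReal hexp₀
    have h1' := ENNReal.tendsto_ofReal hexp₁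
    rw [ENNReal.ofReal_zero] at h0' h1'
    have := h0'.add h1'
    simpa using this
  exact tendsto_of_tendsto_of_tendsto_of_le_of_le tendsto_const_nhds hsum
    (fun k => zero_le) hbound
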